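/- For any n ∈ ℕ, n ≥ 1, and any real numbers x₁,…,xₙ (with no restriction on their size), the family (Ω'(i₁,…,iₙ)·x₁^{i₁}⋯xₙ^{iₙ}) indexed by (i₁,…,iₙ) ∈ ℕⁿ is absolutely summable, i.e., the series Gₙ(x₁,…,xₙ) = Σ_{i₁,…,iₙ ≥ 0} Ω'(i₁,…,iₙ) x₁^{i₁}⋯xₙ^{iₙ} converges absolutely for all values of its arguments. -/

import Mathlib

lemma sum_take_le' (a : List ℕ) (k : ℕ) : (a.take k).sum ≤ a.sum := by
  conv_rhs => rw [← List.take_append_drop k a]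
  rw [List.sum_append]
  omega

lemma sum_take_succ' (a : List ℕ) (k : ℕ) (h : k < a.length) :
    (a.take (k+1)).sum = (a.take k).sum + a.get ⟨k, h⟩ := by
  rw [List.sum_take_succ _ _ h]; simp [List.get_eq_getElem]

lemma exists_block' : ∀ (a : List ℕ) (j : ℕ), j < a.sum →
    ∃ k, k < a.length ∧ (a.take k).sum ≤ j ∧ j < (a.take (k+1)).sum := by
  intro a
  induction a with
  | nil => simp
  | cons b t ih =>
    intro j hj
    rcases Nat.lt_or_ge j b with h | h
    · exact ⟨0, by simp, by simp, by simpa using h⟩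
    · simp only [List.sum_cons] at hj
      obtain ⟨k, hk, h1, h2⟩ := ih (j - b) (by omega)
      refine ⟨k + 1, by simpa using hk, ?_, ?_⟩
      · simp only [List.take_succ_cons, List.sum_cons]; omega
      · simp only [List.take_succ_cons, List.sum_cons]; omega

/-- The monotonicity condition: for the list of block lengths `a`, a permutation `τ` of
`{0, …, a.sum}` must increase on the `k`-th block for even `k` (0-indexed, i.e. odd blocks
in 1-indexed counting) and decrease on the `k`-th block for odd `k`. -/
def MonotCond (a : List ℕ) (τ : Equiv.Perm (Fin (a.sum + 1))) : Prop :=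
  ∀ k, k < a.length →
    ∀ j, (a.take k).sum ≤ j → j < (a.take (k + 1)).sum →
      ∀ h : j + 1 < a.sum + 1,
        if k % 2 = 0
        then τ ⟨j, Nat.lt_of_succ_lt h⟩ < τ ⟨j + 1, h⟩
        else τ ⟨j + 1, h⟩ < τ ⟨j, Nat.lt_of_succ_lt h⟩

/-- `Omega a` is the number of permutations of `{0, …, a.sum}` with the prescribed
alternating monotonicity pattern given by the block lengths in `a`. -/
noncomputable def Omega (a : List ℕ) : ℕ :=
  Nat.card {τ : Equiv.Perm (Fin (a.sum + 1)) // MonotCond a τ}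

/-- The normalized quantity `Ω'(a) = Ω(a) / (N + 1)!` where `N = a.sum`. -/
noncomputable def Omega' (a : List ℕ) : ℝ :=
  (Omega a : ℝ) / (Nat.factorial (a.sum + 1))

lemma monot_chain {a : List ℕ} {τ : Equiv.Perm (Fin (a.sum + 1))} (hτ : MonotCond a τ)
    {k : ℕ} (hk : k < a.length) :
    ∀ q p, (a.take k).sum ≤ p → p < q → q ≤ (a.take (k+1)).sum →
      ∀ (hq : q < a.sum + 1) (hp : p < a.sum + 1),
        if k % 2 = 0 then τ ⟨p, hp⟩ < τ ⟨q, hq⟩ else τ ⟨q, hq⟩ < τ ⟨p, hp⟩ := by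
  intro q
  induction q with
  | zero => omega
  | succ q ih =>
    intro p hsp hpq hqs hq hp
    have hstep := hτ k hk q (by omega) (by omega) hq
    rcases Nat.lt_or_ge p q with h | h
    · have h1 := ih p hsp h (by omega) (by omega) hp
      by_cases hk2 : k % 2 = 0
      · rw [if_pos hk2] at h1 hstep ⊢
        exact lt_trans h1 hstep
      · rw [if_neg hk2] at h1 hstep ⊢
        exact lt_trans hstep h1
    · have : p = q := by omega
      subst this
      exact hstep

lemma omega_le (a : List ℕ) : Omega a ≤ (2 ^ (a.sum + 1)) ^ a.length := by
  classical
  have hblt : ∀ (k : Fin a.length) (t : ℕ), t < a.get k → (a.take k.1).sum + t < a.sum + 1 := by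
    intro k t ht
    have h1 := sum_take_succ' a k.1 k.2
    have h2 := sum_take_le' a (k.1 + 1)
    have he : a.get ⟨k.1, k.2⟩ = a.get k := by congr
    omega
  set g : Equiv.Perm (Fin (a.sum + 1)) → ∀ k : Fin a.length, Fin (a.get k) → Fin (a.sum + 1) :=
    fun τ k t => τ ⟨(a.take k.1).sum + t.1, hblt k t.1 t.2⟩ with hgdef
  have hinj : Function.Injective
      (fun τ : {τ : Equiv.Perm (Fin (a.sum + 1)) // MonotCond a τ} =>
        fun k : Fin a.length => Finset.image (g τ.1 k) Finset.univ) := by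
    intro τ₁ τ₂ hF
    have hg : ∀ k, g τ₁.1 k = g τ₂.1 k := by
      intro k
      have hr : Set.range (g τ₁.1 k) = Set.range (g τ₂.1 k) := by
        have h := congrFun hF k
        simp only at h
        rw [← Set.image_univ, ← Set.image_univ, ← Finset.coe_univ, ← Finset.coe_image,
          ← Finset.coe_image, h]
      have hmono : ∀ (τ : Equiv.Perm (Fin (a.sum + 1))), MonotCond a τ →
          if k.1 % 2 = 0 then StrictMono (g τ k) else StrictAnti (g τ k) := by
        intro τ hτ
        have key : ∀ t t' : Fin (a.get k), t < t' →
            if k.1 % 2 = 0 then g τ k t < g τ k t' else g τ k t' < g τ k t := by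
          intro t t' htt'
          have h1 := sum_take_succ' a k.1 k.2
          have he : a.get ⟨k.1, k.2⟩ = a.get k := by congr
          exact monot_chain hτ k.2 ((a.take k.1).sum + t'.1) ((a.take k.1).sum + t.1)
            (by omega) (by omega) (by omega) _ _
        by_cases hk2 : k.1 % 2 = 0
        · rw [if_pos hk2]
          intro t t' htt'
          have := key t t' htt'
          rwa [if_pos hk2] at this
        · rw [if_neg hk2]
          intro t t' htt'
          have := key t t' htt'
          rwa [if_neg hk2] at this
      have hm1 := hmono τ₁.1 τ₁.2
      have hm2 := hmono τ₂.1 τ₂.2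
      haveI : WellFoundedLT (Fin (a.get k)) := inferInstance
      haveI : WellFoundedGT (Fin (a.get k)) := inferInstance
      by_cases hk2 : k.1 % 2 = 0
      · rw [if_pos hk2] at hm1 hm2
        exact (StrictMono.range_inj hm1 hm2).1 hr
      · rw [if_neg hk2] at hm1 hm2
        exact (StrictAnti.range_inj hm1 hm2).1 hr
    have hval : ∀ p : Fin (a.sum + 1), p.1 < a.sum → τ₁.1 p = τ₂.1 p := by
      intro p hp
      obtain ⟨k, hk, h1, h2⟩ := exists_block' a p.1 hp
      have hss := sum_take_succ' a k hk
      have ht : p.1 - (a.take k).sum < a.get ⟨k, hk⟩ := by omega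
      have h := congrFun (hg ⟨k, hk⟩) ⟨p.1 - (a.take k).sum, ht⟩
      simp only [hgdef] at h
      have hpe : (⟨(a.take k).sum + (p.1 - (a.take k).sum), hblt ⟨k, hk⟩ _ ht⟩ :
          Fin (a.sum + 1)) = p := by
        apply Fin.ext; simp; omega
      rwa [hpe] at h
    have hall : ∀ p : Fin (a.sum + 1), τ₁.1 p = τ₂.1 p := by
      intro p
      rcases Nat.lt_or_ge p.1 a.sum with hp | hp
      · exact hval p hp
      · have hpN : p.1 = a.sum := by omega
        set q := τ₂.1⁻¹ (τ₁.1 p) with hq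
        have hqv : τ₂.1 q = τ₁.1 p := Equiv.apply_symm_apply _ _
        rcases Nat.lt_or_ge q.1 a.sum with hql | hql
        · exfalso
          have h1 := hval q hql
          have hqp : q = p := τ₁.1.injective (by rw [h1, hqv])
          rw [hqp] at hql
          omega
        · have : q = p := by apply Fin.ext; omega
          rw [← hqv, this]
    have : τ₁.1 = τ₂.1 := Equiv.ext hall
    exact Subtype.ext this
  calc Omega a = Nat.card {τ : Equiv.Perm (Fin (a.sum + 1)) // MonotCond a τ} := rfl
    _ ≤ Nat.card (Fin a.length → Finset (Fin (a.sum + 1))) :=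
        Nat.card_le_card_of_injective _ hinj
    _ = (2 ^ (a.sum + 1)) ^ a.length := by
        rw [Nat.card_eq_fintype_card, Fintype.card_fun, Fintype.card_finset, Fintype.card_fin,
          Fintype.card_fin]

lemma summable_aux : ∀ (n : ℕ) (y : Fin n → ℝ), (∀ k, 0 ≤ y k) →
    Summable (fun i : Fin n → ℕ => ∏ k, y k ^ i k / (Nat.factorial (i k) : ℝ)) := by
  intro n
  induction n with
  | zero =>
    intro y _
    exact Summable.of_finite
  | succ n ih =>
    intro y hy
    have h1 : Summable (fun m : ℕ => y 0 ^ m / (Nat.factorial m : ℝ)) :=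
      Real.summable_pow_div_factorial (y 0)
    have h2 := ih (fun k => y k.succ) (fun k => hy k.succ)
    have h3 := h1.mul_of_nonneg h2
      (fun m => div_nonneg (pow_nonneg (hy 0) m) (by positivity))
      (fun i => Finset.prod_nonneg fun k _ =>
        div_nonneg (pow_nonneg (hy k.succ) _) (by positivity))
    have h4 := h3.comp_injective (Fin.consEquiv fun _ : Fin (n+1) => ℕ).symm.injective
    apply h4.congr
    intro i
    rw [Function.comp_apply, Fin.prod_univ_succ]
    rfl

theorem stmt_6 (n : ℕ) (hn : 1 ≤ n) (x : Fin n → ℝ) :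
    Summable (fun i : Fin n → ℕ =>
      |Omega' (List.ofFn i) * ∏ k : Fin n, x k ^ i k|) := by
  have hsum := summable_aux n (fun k => 2 ^ n * |x k|) (fun k => by positivity)
  refine Summable.of_nonneg_of_le (fun i => abs_nonneg _) ?_ (hsum.mul_left ((2:ℝ) ^ n))
  intro i
  set S := ∑ k, i k with hS
  have hsm : (List.ofFn i).sum = S := by rw [List.sum_ofFn]
  have hln : (List.ofFn i).length = n := List.length_ofFn
  have hOm : (Omega (List.ofFn i) : ℝ) ≤ ((2:ℝ) ^ (S+1)) ^ n := by
    have h := omega_le (List.ofFn i)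
    rw [hsm, hln] at h
    exact_mod_cast h
  have hfacpos : (0:ℝ) < ∏ k, ((i k).factorial : ℝ) :=
    Finset.prod_pos fun k _ => by exact_mod_cast (i k).factorial_pos
  have hfac : (∏ k, ((i k).factorial : ℝ)) ≤ ((S+1).factorial : ℝ) := by
    have h1 : (∏ k, (i k).factorial) ∣ S.factorial :=
      Nat.prod_factorial_dvd_factorial_sum _ _
    have h2 : S.factorial ≤ (S+1).factorial := Nat.factorial_le (by omega)
    exact_mod_cast le_trans (Nat.le_of_dvd (Nat.factorial_pos _) h1) h2
  have habs : |Omega' (List.ofFn i) * ∏ k, x k ^ i k| =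
      (Omega (List.ofFn i) : ℝ) / (((S+1).factorial : ℕ) : ℝ) * ∏ k, |x k| ^ i k := by
    rw [abs_mul, Finset.abs_prod]
    simp only [abs_pow]
    congr 1
    rw [Omega', hsm, abs_of_nonneg]
    positivity
  rw [habs]
  have h2pow : ((2:ℝ) ^ (S+1)) ^ n = 2 ^ n * ((2:ℝ) ^ n) ^ S := by
    rw [← pow_mul, ← pow_mul, ← pow_add]
    congr 1
    ring
  have hprod : ∏ k, ((2:ℝ) ^ n * |x k|) ^ i k / ((i k).factorial : ℝ)
      = ((2:ℝ) ^ n) ^ S * (∏ k, |x k| ^ i k) / ∏ k, ((i k).factorial : ℝ) := by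
    rw [Finset.prod_div_distrib]
    congr 1
    simp_rw [mul_pow]
    rw [Finset.prod_mul_distrib, Finset.prod_pow_eq_pow_sum]
  have hP : (0:ℝ) ≤ ∏ k, |x k| ^ i k :=
    Finset.prod_nonneg fun k _ => by positivity
  calc (Omega (List.ofFn i) : ℝ) / (((S+1).factorial : ℕ) : ℝ) * ∏ k, |x k| ^ i k
      ≤ ((2:ℝ) ^ (S+1)) ^ n / (((S+1).factorial : ℕ) : ℝ) * ∏ k, |x k| ^ i k := by
        gcongr
    _ = 2 ^ n * ((((2:ℝ) ^ n) ^ S * ∏ k, |x k| ^ i k) / (((S+1).factorial : ℕ) : ℝ)) := by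
        rw [h2pow]; ring
    _ ≤ 2 ^ n * ((((2:ℝ) ^ n) ^ S * ∏ k, |x k| ^ i k) / ∏ k, ((i k).factorial : ℝ)) := by
        gcongr
    _ = 2 ^ n * ∏ k, ((2:ℝ) ^ n * |x k|) ^ i k / ((i k).factorial : ℝ) := by
        rw [hprod]
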